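/- (Conditional unbiasedness of the DR-Learner pseudo-outcome.) Let π0(x,z) := z·e(x) + (1−z)·(1−e(x)), where e∘X is a version of E[Z | σ(X)] with ε ≤ e ≤ 1−ε, and let m_0, m_1 be versions of E[Y | X, Z=0] and E[Y | X, Z=1]. Then E[ (2Z−1)/π0(X,Z) · (Y − m_Z(X)) | σ(X) ] = 0 P-almost surely; consequently, for the pseudo-outcome Γ̇0 := (2Z−1)/π0(X,Z)·(Y − m_Z(X)) + m_1(X) − m_0(X) one has E[Γ̇0 | σ(X)] = m_1(X) − m_0(X) almost surely, and hence for any sub-σ-algebra G of σ(X), E[Γ̇0 | G] = E[m_1(X) − m_0(X) | G] almost surely. -/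

import Mathlib

open MeasureTheory ProbabilityTheory

lemma bdd_integrable {Ω : Type*} [MeasurableSpace Ω] (P : Measure Ω) [IsFiniteMeasure P]
    {f : Ω → ℝ} (hf : Measurable f) {C : ℝ} (h : ∀ ω, |f ω| ≤ C) : Integrable f P :=
  (integrable_const C).mono' hf.aestronglyMeasurable
    (Filter.Eventually.of_forall fun ω => by simpa [Real.norm_eq_abs] using h ω)

lemma trunc_integrable {Ω : Type*} [MeasurableSpace Ω] (P : Measure Ω) [IsProbabilityMeasure P]
    {f : Ω → ℝ} (hf : Measurable f) {C : ℝ}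
    (h : ∀ n : ℕ, ∫ ω, (if |f ω| ≤ (n : ℝ) then |f ω| else 0) ∂P ≤ C) : Integrable f P := by
  have htm : ∀ n : ℕ, Measurable fun ω => if |f ω| ≤ (n : ℝ) then |f ω| else 0 := fun n =>
    Measurable.ite (hf.abs measurableSet_Iic) hf.abs measurable_const
  have hti : ∀ n : ℕ, Integrable (fun ω => if |f ω| ≤ (n : ℝ) then |f ω| else 0) P := by
    intro n
    refine bdd_integrable P (htm n) (C := n) fun ω => ?_
    by_cases hle : |f ω| ≤ (n : ℝ)
    · rw [if_pos hle, abs_of_nonneg (abs_nonneg _)]; exact hle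
    · rw [if_neg hle]; simp
  refine ⟨hf.aestronglyMeasurable, ?_⟩
  rw [hasFiniteIntegral_iff_norm]
  have hsup : ∀ ω, (⨆ n : ℕ, ENNReal.ofReal (if |f ω| ≤ (n : ℝ) then |f ω| else 0))
      = ENNReal.ofReal ‖f ω‖ := by
    intro ω
    apply le_antisymm
    · refine iSup_le fun n => ENNReal.ofReal_le_ofReal ?_
      by_cases hle : |f ω| ≤ (n : ℝ) <;> simp [hle, Real.norm_eq_abs, abs_nonneg]
    · refine le_iSup_of_le ⌈|f ω|⌉₊ (le_of_eq ?_)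
      rw [if_pos (Nat.le_ceil _), Real.norm_eq_abs]
  have hmono : Monotone fun (n : ℕ) (ω : Ω) =>
      ENNReal.ofReal (if |f ω| ≤ (n : ℝ) then |f ω| else 0) := by
    intro n m hnm
    intro ω
    simp only
    by_cases hle : |f ω| ≤ (n : ℝ)
    · rw [if_pos hle, if_pos (hle.trans (by exact_mod_cast hnm))]
    · simp [hle]
  calc ∫⁻ ω, ENNReal.ofReal ‖f ω‖ ∂P
      = ∫⁻ ω, ⨆ n : ℕ, ENNReal.ofReal (if |f ω| ≤ (n : ℝ) then |f ω| else 0) ∂P := by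
        simp_rw [hsup]
    _ = ⨆ n : ℕ, ∫⁻ ω, ENNReal.ofReal (if |f ω| ≤ (n : ℝ) then |f ω| else 0) ∂P :=
        lintegral_iSup (fun n => (htm n).ennreal_ofReal) hmono
    _ ≤ ENNReal.ofReal C := by
        refine iSup_le fun n => ?_
        rw [← ofReal_integral_eq_lintegral_ofReal (hti n)
          (Filter.Eventually.of_forall fun ω => by positivity)]
        exact ENNReal.ofReal_le_ofReal (h n)
    _ < ⊤ := ENNReal.ofReal_lt_top

lemma cond_mean_integrable {Ω S : Type*} [MeasurableSpace Ω] [MeasurableSpace S]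
    (P : Measure Ω) [IsProbabilityMeasure P]
    (X : Ω → S) (hX : Measurable X) (Y : Ω → ℝ) (hY : Measurable Y)
    {C : ℝ} (hC : 0 ≤ C) (hYb : ∀ ω, |Y ω| ≤ C)
    (χ : Ω → ℝ) (hχ : Measurable χ) (hχ01 : ∀ ω, χ ω = 0 ∨ χ ω = 1)
    (q : S → ℝ) (hq : Measurable q) {ε : ℝ} (hε : 0 < ε) (hqlb : ∀ x, ε ≤ q x) (hqub : ∀ x, q x ≤ 1)
    (hVq : ∀ g : S → ℝ, Measurable g → (∃ C, ∀ x, |g x| ≤ C) →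
      ∫ ω, χ ω * g (X ω) ∂P = ∫ ω, q (X ω) * g (X ω) ∂P)
    (m1 : S → ℝ) (hm1 : Measurable m1)
    (hm1v : ∀ g : S → ℝ, Measurable g → (∃ C, ∀ x, |g x| ≤ C) →
      ∫ ω, Y ω * χ ω * g (X ω) ∂P = ∫ ω, m1 (X ω) * χ ω * g (X ω) ∂P) :
    Integrable (fun ω => m1 (X ω)) P := by
  apply trunc_integrable P (hm1.comp hX) (C := C / ε)
  intro n
  set s : S → ℝ := fun x =>
    (if |m1 x| ≤ (n : ℝ) then 1 else 0) * (if 0 ≤ m1 x then 1 else -1) with hs_def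
  set u : S → ℝ := fun x => if |m1 x| ≤ (n : ℝ) then |m1 x| else 0 with hu_def
  have hs_meas : Measurable s :=
    (Measurable.ite (hm1.abs measurableSet_Iic) measurable_const measurable_const).mul
      (Measurable.ite (hm1 measurableSet_Ici) measurable_const measurable_const)
  have hu_meas : Measurable u :=
    Measurable.ite (hm1.abs measurableSet_Iic) hm1.abs measurable_const
  have hs_bd : ∀ x, |s x| ≤ 1 := by
    intro x
    simp only [hs_def]
    by_cases h1 : |m1 x| ≤ (n : ℝ) <;> by_cases h2 : 0 ≤ m1 x <;> simp [h1, h2]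
  have hu_nonneg : ∀ x, 0 ≤ u x := by
    intro x; simp only [hu_def]
    by_cases h1 : |m1 x| ≤ (n : ℝ) <;> simp [h1, abs_nonneg]
  have hu_bd : ∀ x, |u x| ≤ (n : ℝ) := by
    intro x; simp only [hu_def]
    by_cases h1 : |m1 x| ≤ (n : ℝ)
    · rw [if_pos h1, abs_of_nonneg (abs_nonneg _)]; exact h1
    · rw [if_neg h1]; simp
  have hms : ∀ x, m1 x * s x = u x := by
    intro x
    simp only [hs_def, hu_def]
    by_cases h2 : 0 ≤ m1 x
    · rw [abs_of_nonneg h2, if_pos h2]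
      by_cases h1 : m1 x ≤ (n : ℝ)
      · rw [if_pos h1, if_pos h1]; ring
      · rw [if_neg h1, if_neg h1]; ring
    · rw [abs_of_neg (not_le.mp h2), if_neg h2]
      by_cases h1 : -m1 x ≤ (n : ℝ)
      · rw [if_pos h1, if_pos h1]; ring
      · rw [if_neg h1, if_neg h1]; ring
  have hχ_bd : ∀ ω, |χ ω| ≤ 1 := by
    intro ω; rcases hχ01 ω with h | h <;> simp [h]
  -- pointwise identity
  have e2 : ∀ ω, χ ω * u (X ω) = m1 (X ω) * χ ω * s (X ω) := by
    intro ω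
    rcases hχ01 ω with h | h <;> simp [h]
    rw [hms]
  have int_u : Integrable (fun ω => u (X ω)) P :=
    bdd_integrable P (hu_meas.comp hX) fun ω => hu_bd (X ω)
  have int_qu : Integrable (fun ω => q (X ω) * u (X ω)) P := by
    refine bdd_integrable P ((hq.comp hX).mul (hu_meas.comp hX)) (C := (n : ℝ)) fun ω => ?_
    rw [abs_mul]
    calc |q (X ω)| * |u (X ω)| ≤ 1 * |u (X ω)| := by
          refine mul_le_mul_of_nonneg_right ?_ (abs_nonneg _)
          rw [abs_of_nonneg (hε.le.trans (hqlb _))]; exact hqub _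
      _ ≤ (n : ℝ) := by rw [one_mul]; exact hu_bd _
  have step1 : ε * ∫ ω, u (X ω) ∂P ≤ ∫ ω, q (X ω) * u (X ω) ∂P := by
    rw [← integral_const_mul]
    refine integral_mono (int_u.const_mul ε) int_qu fun ω => ?_
    exact mul_le_mul_of_nonneg_right (hqlb _) (hu_nonneg _)
  have e1 : ∫ ω, χ ω * u (X ω) ∂P = ∫ ω, q (X ω) * u (X ω) ∂P :=
    hVq u hu_meas ⟨n, hu_bd⟩
  have e3 : ∫ ω, Y ω * χ ω * s (X ω) ∂P = ∫ ω, m1 (X ω) * χ ω * s (X ω) ∂P :=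
    hm1v s hs_meas ⟨1, hs_bd⟩
  have e4 : ∫ ω, m1 (X ω) * χ ω * s (X ω) ∂P = ∫ ω, χ ω * u (X ω) ∂P := by
    refine integral_congr_ae (Filter.Eventually.of_forall fun ω => ?_)
    show m1 (X ω) * χ ω * s (X ω) = χ ω * u (X ω)
    rw [e2 ω]
  have e5 : ∫ ω, Y ω * χ ω * s (X ω) ∂P ≤ C := by
    have hb : ∀ ω, |Y ω * χ ω * s (X ω)| ≤ C := by
      intro ω
      rw [abs_mul, abs_mul]
      calc |Y ω| * |χ ω| * |s (X ω)| ≤ C * 1 * 1 := by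
            refine mul_le_mul (mul_le_mul (hYb ω) (hχ_bd ω) (abs_nonneg _)
              ((abs_nonneg _).trans (hYb ω))) (hs_bd _) (abs_nonneg _) ?_
            positivity
        _ = C := by ring
    have hint : Integrable (fun ω => Y ω * χ ω * s (X ω)) P :=
      bdd_integrable P ((hY.mul hχ).mul (hs_meas.comp hX)) hb
    calc ∫ ω, Y ω * χ ω * s (X ω) ∂P ≤ ∫ _ω, C ∂P :=
          integral_mono hint (integrable_const C) fun ω => (le_abs_self _).trans (hb ω)
      _ = C := by simp
  have key : ε * ∫ ω, u (X ω) ∂P ≤ C := by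
    calc ε * ∫ ω, u (X ω) ∂P ≤ ∫ ω, q (X ω) * u (X ω) ∂P := step1
      _ = ∫ ω, χ ω * u (X ω) ∂P := e1.symm
      _ = ∫ ω, m1 (X ω) * χ ω * s (X ω) ∂P := e4.symm
      _ = ∫ ω, Y ω * χ ω * s (X ω) ∂P := e3.symm
      _ ≤ C := e5
  show ∫ ω, u (X ω) ∂P ≤ C / ε
  rw [le_div_iff₀ hε, mul_comm]
  exact key


/-- conditional unbiasedness of the DR-Learner pseudo-outcome:
E[(2Z−1)/π0(X,Z)·(Y − m_Z(X)) | σ(X)] = 0 a.s.; consequently the pseudo-outcome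
Γ̇0 = (2Z−1)/π0(X,Z)·(Y − m_Z(X)) + m1(X) − m0(X) satisfies E[Γ̇0 | σ(X)] = m1(X) − m0(X)
a.s., and for any sub-σ-algebra G of σ(X), E[Γ̇0 | G] = E[m1(X) − m0(X) | G] a.s. -/
theorem stmt_11
    {Ω : Type*} [mΩ : MeasurableSpace Ω] (P : Measure Ω) [IsProbabilityMeasure P]
    {S : Type*} [mS : MeasurableSpace S]
    (X : Ω → S) (hX : Measurable X)
    (Z Y : Ω → ℝ) (hZ : Measurable Z) (hY : Measurable Y)
    (hZ01 : ∀ ω, Z ω = 0 ∨ Z ω = 1)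
    (hYb : ∃ C, ∀ ω, |Y ω| ≤ C)
    (e : S → ℝ) (he : Measurable e) (ε : ℝ) (hε : 0 < ε) (hε2 : ε < 1/2)
    (hebd : ∀ x, ε ≤ e x ∧ e x ≤ 1 - ε)
    (hVe : ∀ g : S → ℝ, Measurable g → (∃ C, ∀ x, |g x| ≤ C) →
      ∫ ω, Z ω * g (X ω) ∂P = ∫ ω, e (X ω) * g (X ω) ∂P)
    (m0 m1 : S → ℝ) (hm0 : Measurable m0) (hm1 : Measurable m1)
    (hm0v : ∀ g : S → ℝ, Measurable g → (∃ C, ∀ x, |g x| ≤ C) →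
      ∫ ω, Y ω * (if Z ω = 0 then (1:ℝ) else 0) * g (X ω) ∂P
        = ∫ ω, m0 (X ω) * (if Z ω = 0 then (1:ℝ) else 0) * g (X ω) ∂P)
    (hm1v : ∀ g : S → ℝ, Measurable g → (∃ C, ∀ x, |g x| ≤ C) →
      ∫ ω, Y ω * (if Z ω = 1 then (1:ℝ) else 0) * g (X ω) ∂P
        = ∫ ω, m1 (X ω) * (if Z ω = 1 then (1:ℝ) else 0) * g (X ω) ∂P) :
    (P[fun ω => (2 * Z ω - 1) / (Z ω * e (X ω) + (1 - Z ω) * (1 - e (X ω)))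
          * (Y ω - (if Z ω = 1 then m1 (X ω) else m0 (X ω)))
        | MeasurableSpace.comap X mS] =ᵐ[P] 0)
    ∧ (P[fun ω => (2 * Z ω - 1) / (Z ω * e (X ω) + (1 - Z ω) * (1 - e (X ω)))
            * (Y ω - (if Z ω = 1 then m1 (X ω) else m0 (X ω)))
          + (m1 (X ω) - m0 (X ω))
        | MeasurableSpace.comap X mS] =ᵐ[P] fun ω => m1 (X ω) - m0 (X ω))
    ∧ (∀ G : MeasurableSpace Ω, G ≤ MeasurableSpace.comap X mS →
        P[fun ω => (2 * Z ω - 1) / (Z ω * e (X ω) + (1 - Z ω) * (1 - e (X ω)))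
              * (Y ω - (if Z ω = 1 then m1 (X ω) else m0 (X ω)))
            + (m1 (X ω) - m0 (X ω)) | G]
          =ᵐ[P] P[fun ω => m1 (X ω) - m0 (X ω) | G]) := by
  classical
  obtain ⟨C₀, hC₀⟩ := hYb
  set C : ℝ := max C₀ 0 with hC_def
  have hC : 0 ≤ C := le_max_right _ _
  have hYC : ∀ ω, |Y ω| ≤ C := fun ω => (hC₀ ω).trans (le_max_left _ _)
  have hm : (MeasurableSpace.comap X mS) ≤ mΩ := hX.comap_le
  -- indicator functions of Z = 1 and Z = 0
  set χ1 : Ω → ℝ := fun ω => if Z ω = 1 then 1 else 0 with hχ1_def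
  set χ0 : Ω → ℝ := fun ω => if Z ω = 0 then 1 else 0 with hχ0_def
  have hχ1m : Measurable χ1 :=
    Measurable.ite (hZ (measurableSet_singleton 1)) measurable_const measurable_const
  have hχ0m : Measurable χ0 :=
    Measurable.ite (hZ (measurableSet_singleton 0)) measurable_const measurable_const
  have hχ101 : ∀ ω, χ1 ω = 0 ∨ χ1 ω = 1 := by
    intro ω; by_cases h : Z ω = 1 <;> simp [hχ1_def, h]
  have hχ001 : ∀ ω, χ0 ω = 0 ∨ χ0 ω = 1 := by
    intro ω; by_cases h : Z ω = 0 <;> simp [hχ0_def, h]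
  have hχ1Z : ∀ ω, χ1 ω = Z ω := by
    intro ω; rcases hZ01 ω with h | h <;> simp [hχ1_def, h]
  have hχ0Z : ∀ ω, χ0 ω = 1 - Z ω := by
    intro ω; rcases hZ01 ω with h | h <;> simp [hχ0_def, h]
  have hχ1b : ∀ ω, |χ1 ω| ≤ 1 := by intro ω; rcases hχ101 ω with h | h <;> simp [h]
  have hχ0b : ∀ ω, |χ0 ω| ≤ 1 := by intro ω; rcases hχ001 ω with h | h <;> simp [h]
  -- version of the propensity identity for χ1 and χ0
  have hVe1 : ∀ g : S → ℝ, Measurable g → (∃ C, ∀ x, |g x| ≤ C) →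
      ∫ ω, χ1 ω * g (X ω) ∂P = ∫ ω, e (X ω) * g (X ω) ∂P := by
    intro g hg hb
    rw [← hVe g hg hb]
    exact integral_congr_ae (Filter.Eventually.of_forall fun ω => by beta_reduce; rw [hχ1Z ω])
  have hVe0 : ∀ g : S → ℝ, Measurable g → (∃ C, ∀ x, |g x| ≤ C) →
      ∫ ω, χ0 ω * g (X ω) ∂P = ∫ ω, (1 - e (X ω)) * g (X ω) ∂P := by
    intro g hg hb
    obtain ⟨D, hD⟩ := hb
    have hgi : Integrable (fun ω => g (X ω)) P :=
      bdd_integrable P (hg.comp hX) fun ω => hD (X ω)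
    have hZgi : Integrable (fun ω => Z ω * g (X ω)) P := by
      refine bdd_integrable P (hZ.mul (hg.comp hX)) (C := 1 * max D 0) fun ω => ?_
      rw [abs_mul]
      refine mul_le_mul ?_ ((hD _).trans (le_max_left _ _)) (abs_nonneg _) zero_le_one
      rcases hZ01 ω with h | h <;> simp [h]
    have hegi : Integrable (fun ω => e (X ω) * g (X ω)) P := by
      refine bdd_integrable P ((he.comp hX).mul (hg.comp hX)) (C := 1 * max D 0) fun ω => ?_
      rw [abs_mul]
      refine mul_le_mul ?_ ((hD _).trans (le_max_left _ _)) (abs_nonneg _) zero_le_one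
      rw [abs_of_nonneg (hε.le.trans (hebd _).1)]
      have := (hebd (X ω)).2; linarith
    have e1 : ∫ ω, χ0 ω * g (X ω) ∂P = ∫ ω, (g (X ω) - Z ω * g (X ω)) ∂P := by
      refine integral_congr_ae (Filter.Eventually.of_forall fun ω => ?_)
      beta_reduce
      rw [hχ0Z ω]; ring
    have e2 : ∫ ω, (1 - e (X ω)) * g (X ω) ∂P
        = ∫ ω, (g (X ω) - e (X ω) * g (X ω)) ∂P := by
      refine integral_congr_ae (Filter.Eventually.of_forall fun ω => ?_)
      beta_reduce
      ring
    rw [e1, e2, integral_sub hgi hZgi, integral_sub hgi hegi, hVe g hg ⟨D, hD⟩]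
  -- integrability of m1 ∘ X and m0 ∘ X
  have int_m1X : Integrable (fun ω => m1 (X ω)) P := by
    refine cond_mean_integrable P X hX Y hY hC hYC χ1 hχ1m hχ101 e he hε
      (fun x => (hebd x).1) (fun x => by have := (hebd x).2; linarith) hVe1 m1 hm1 ?_
    exact hm1v
  have int_m0X : Integrable (fun ω => m0 (X ω)) P := by
    refine cond_mean_integrable P X hX Y hY hC hYC χ0 hχ0m hχ001 (fun x => 1 - e x)
      (measurable_const.sub he) hε
      (fun x => by have := (hebd x).2; show ε ≤ 1 - e x; linarith)
      (fun x => by have := (hebd x).1; show 1 - e x ≤ 1; linarith) hVe0 m0 hm0 ?_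
    exact hm0v
  -- key orthogonality: for each arm, the integral of (Y - mz(X)) χ g(X) vanishes
  have key : ∀ (mz : S → ℝ), Measurable mz → Integrable (fun ω => mz (X ω)) P →
      ∀ (χ : Ω → ℝ), Measurable χ → (∀ ω, |χ ω| ≤ 1) →
      (∀ g : S → ℝ, Measurable g → (∃ C, ∀ x, |g x| ≤ C) →
        ∫ ω, Y ω * χ ω * g (X ω) ∂P = ∫ ω, mz (X ω) * χ ω * g (X ω) ∂P) →
      ∀ g : S → ℝ, Measurable g → (∃ D, ∀ x, |g x| ≤ D) →
      Integrable (fun ω => (Y ω - mz (X ω)) * χ ω * g (X ω)) P ∧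
      ∫ ω, (Y ω - mz (X ω)) * χ ω * g (X ω) ∂P = 0 := by
    intro mz hmz hiz χ hχm hχb hv g hg hgb
    obtain ⟨D, hD⟩ := hgb
    have hD' : ∀ x, |g x| ≤ max D 0 := fun x => (hD x).trans (le_max_left _ _)
    have hD0 : (0:ℝ) ≤ max D 0 := le_max_right _ _
    have i1 : Integrable (fun ω => Y ω * χ ω * g (X ω)) P := by
      refine bdd_integrable P ((hY.mul hχm).mul (hg.comp hX)) (C := C * max D 0) fun ω => ?_
      rw [abs_mul, abs_mul]
      calc |Y ω| * |χ ω| * |g (X ω)| ≤ C * 1 * max D 0 :=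
            mul_le_mul (mul_le_mul (hYC ω) (hχb ω) (abs_nonneg _) hC) (hD' _)
              (abs_nonneg _) (by positivity)
        _ = C * max D 0 := by ring
    have i2 : Integrable (fun ω => mz (X ω) * χ ω * g (X ω)) P := by
      refine (hiz.abs.mul_const (max D 0)).mono'
        (((hmz.comp hX).mul hχm).mul (hg.comp hX)).aestronglyMeasurable
        (Filter.Eventually.of_forall fun ω => ?_)
      rw [Real.norm_eq_abs, abs_mul, abs_mul]
      calc |mz (X ω)| * |χ ω| * |g (X ω)| ≤ |mz (X ω)| * 1 * max D 0 :=
            mul_le_mul (mul_le_mul le_rfl (hχb ω) (abs_nonneg _) (abs_nonneg _)) (hD' _)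
              (abs_nonneg _) (by positivity)
        _ = |mz (X ω)| * max D 0 := by ring
    have isub : Integrable (fun ω => (Y ω - mz (X ω)) * χ ω * g (X ω)) P := by
      have : (fun ω => (Y ω - mz (X ω)) * χ ω * g (X ω))
          = fun ω => Y ω * χ ω * g (X ω) - mz (X ω) * χ ω * g (X ω) := by
        funext ω; ring
      rw [this]; exact i1.sub i2
    refine ⟨isub, ?_⟩
    have heq : ∫ ω, (Y ω - mz (X ω)) * χ ω * g (X ω) ∂P
        = (∫ ω, Y ω * χ ω * g (X ω) ∂P) - ∫ ω, mz (X ω) * χ ω * g (X ω) ∂P := by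
      rw [← integral_sub i1 i2]
      exact integral_congr_ae (Filter.Eventually.of_forall fun ω => by beta_reduce; ring)
    rw [heq, hv g hg ⟨D, hD⟩, sub_self]
  -- the pseudo-outcome residual W
  set W : Ω → ℝ := fun ω => (2 * Z ω - 1) / (Z ω * e (X ω) + (1 - Z ω) * (1 - e (X ω)))
      * (Y ω - (if Z ω = 1 then m1 (X ω) else m0 (X ω))) with hW_def
  have hW1 : ∀ ω, Z ω = 1 → W ω = (Y ω - m1 (X ω)) / e (X ω) := by
    intro ω h
    simp only [hW_def]
    rw [h]
    norm_num
    ring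
  have hW0 : ∀ ω, Z ω = 0 → W ω = -(Y ω - m0 (X ω)) / (1 - e (X ω)) := by
    intro ω h
    simp only [hW_def]
    rw [h]
    norm_num
    ring
  have hmZX : Measurable fun ω => (if Z ω = 1 then m1 (X ω) else m0 (X ω)) :=
    Measurable.ite (hZ (measurableSet_singleton 1)) (hm1.comp hX) (hm0.comp hX)
  have hden : Measurable fun ω => Z ω * e (X ω) + (1 - Z ω) * (1 - e (X ω)) :=
    (hZ.mul (he.comp hX)).add ((measurable_const.sub hZ).mul
      (measurable_const.sub (he.comp hX)))
  have hWm : Measurable W :=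
    (((measurable_const.mul hZ).sub measurable_const).div hden).mul (hY.sub hmZX)
  have hWb : ∀ ω, |W ω| ≤ (C + (|m1 (X ω)| + |m0 (X ω)|)) / ε := by
    intro ω
    have habs1 : |Y ω - m1 (X ω)| ≤ C + (|m1 (X ω)| + |m0 (X ω)|) := by
      have h3 := abs_sub (Y ω) (m1 (X ω))
      have := hYC ω; have := abs_nonneg (m0 (X ω)); linarith
    have habs0 : |Y ω - m0 (X ω)| ≤ C + (|m1 (X ω)| + |m0 (X ω)|) := by
      have h3 := abs_sub (Y ω) (m0 (X ω))
      have := hYC ω; have := abs_nonneg (m1 (X ω)); linarith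
    rcases hZ01 ω with h | h
    · rw [hW0 ω h]
      have hd : ε ≤ 1 - e (X ω) := by have := (hebd (X ω)).2; linarith
      have hd0 : (0:ℝ) < 1 - e (X ω) := lt_of_lt_of_le hε hd
      rw [abs_div, abs_neg, abs_of_pos hd0]
      exact div_le_div₀ (by positivity) habs0 hε hd
    · rw [hW1 ω h]
      have hd : ε ≤ e (X ω) := (hebd (X ω)).1
      have hd0 : (0:ℝ) < e (X ω) := lt_of_lt_of_le hε hd
      rw [abs_div, abs_of_pos hd0]
      exact div_le_div₀ (by positivity) habs1 hε hd
  have hWint : Integrable W P := by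
    refine (((integrable_const C).add (int_m1X.abs.add int_m0X.abs)).div_const ε).mono'
      hWm.aestronglyMeasurable (Filter.Eventually.of_forall fun ω => ?_)
    rw [Real.norm_eq_abs]
    exact hWb ω
  -- the set integrals of W over σ(X)-measurable sets vanish
  have hset : ∀ s, MeasurableSet[(MeasurableSpace.comap X mS)] s → ∫ ω in s, W ω ∂P = 0 := by
    intro s hs
    obtain ⟨B, hB, rfl⟩ := hs
    set g1 : S → ℝ := fun x => (if x ∈ B then 1 else 0) / e x with hg1_def
    set g0 : S → ℝ := fun x => (if x ∈ B then 1 else 0) / (1 - e x) with hg0_def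
    have hg1m : Measurable g1 :=
      (Measurable.ite hB measurable_const measurable_const).div he
    have hg0m : Measurable g0 :=
      (Measurable.ite hB measurable_const measurable_const).div (measurable_const.sub he)
    have hindb : ∀ x : S, |(if x ∈ B then (1:ℝ) else 0)| ≤ 1 := by
      intro x; by_cases h : x ∈ B <;> simp [h]
    have hg1b : ∀ x, |g1 x| ≤ 1 / ε := by
      intro x
      have hd : ε ≤ e x := (hebd x).1
      have hd0 : (0:ℝ) < e x := lt_of_lt_of_le hε hd
      simp only [hg1_def]
      rw [abs_div, abs_of_pos hd0]
      exact div_le_div₀ (by norm_num) (hindb x) hε hd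
    have hg0b : ∀ x, |g0 x| ≤ 1 / ε := by
      intro x
      have hd : ε ≤ 1 - e x := by have := (hebd x).2; linarith
      have hd0 : (0:ℝ) < 1 - e x := lt_of_lt_of_le hε hd
      simp only [hg0_def]
      rw [abs_div, abs_of_pos hd0]
      exact div_le_div₀ (by norm_num) (hindb x) hε hd
    obtain ⟨int1, eq1⟩ := key m1 hm1 int_m1X χ1 hχ1m hχ1b hm1v g1 hg1m ⟨1 / ε, hg1b⟩
    obtain ⟨int0, eq0⟩ := key m0 hm0 int_m0X χ0 hχ0m hχ0b hm0v g0 hg0m ⟨1 / ε, hg0b⟩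
    have hdecomp : ∀ ω, Set.indicator (X ⁻¹' B) W ω
        = (Y ω - m1 (X ω)) * χ1 ω * g1 (X ω) - (Y ω - m0 (X ω)) * χ0 ω * g0 (X ω) := by
      intro ω
      by_cases hω : X ω ∈ B
      · rw [Set.indicator_of_mem (show ω ∈ X ⁻¹' B from hω)]
        rcases hZ01 ω with h | h
        · rw [hW0 ω h]
          simp only [hχ1_def, hχ0_def, hg1_def, hg0_def, h, if_pos hω]
          norm_num
          ring
        · rw [hW1 ω h]
          simp only [hχ1_def, hχ0_def, hg1_def, hg0_def, h, if_pos hω]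
          norm_num
          ring
      · rw [Set.indicator_of_notMem (show ω ∉ X ⁻¹' B from hω)]
        simp only [hg1_def, hg0_def, if_neg hω]
        norm_num
    rw [← integral_indicator (hX hB),
      integral_congr_ae (Filter.Eventually.of_forall hdecomp),
      integral_sub int1 int0, eq1, eq0, sub_self]
  -- first conjunct
  have h1 : P[W|(MeasurableSpace.comap X mS)] =ᵐ[P] 0 := by
    have h0 := ae_eq_condExp_of_forall_setIntegral_eq (μ := P) (f := W)
      (g := fun _ => (0:ℝ)) hm hWint
      (fun s _ _ => (integrable_zero _ _ _).integrableOn)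
      (fun s hs _ => by rw [hset s hs]; simp)
      (StronglyMeasurable.aestronglyMeasurable (@stronglyMeasurable_const Ω ℝ (MeasurableSpace.comap X mS) _ (0:ℝ)))
    exact h0.symm
  -- second conjunct
  have hXcm : Measurable[(MeasurableSpace.comap X mS)] X := fun _t ht => ⟨_t, ht, rfl⟩
  have hDmeas : StronglyMeasurable[(MeasurableSpace.comap X mS)] (fun ω => m1 (X ω) - m0 (X ω)) :=
    ((hm1.comp hXcm).sub (hm0.comp hXcm)).stronglyMeasurable
  have hDint : Integrable (fun ω => m1 (X ω) - m0 (X ω)) P := int_m1X.sub int_m0X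
  have hDcond : P[(fun ω => m1 (X ω) - m0 (X ω))|(MeasurableSpace.comap X mS)] = fun ω => m1 (X ω) - m0 (X ω) :=
    condExp_of_stronglyMeasurable hm hDmeas hDint
  have h2 : P[(fun ω => W ω + (m1 (X ω) - m0 (X ω)))|(MeasurableSpace.comap X mS)]
      =ᵐ[P] fun ω => m1 (X ω) - m0 (X ω) := by
    have hadd : P[(fun ω => W ω + (m1 (X ω) - m0 (X ω)))|(MeasurableSpace.comap X mS)]
        =ᵐ[P] P[W|(MeasurableSpace.comap X mS)] + P[(fun ω => m1 (X ω) - m0 (X ω))|(MeasurableSpace.comap X mS)] :=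
      condExp_add hWint hDint (MeasurableSpace.comap X mS)
    refine hadd.trans ?_
    filter_upwards [h1] with ω hω
    show (P[W|(MeasurableSpace.comap X mS)]) ω
        + (P[(fun ω => m1 (X ω) - m0 (X ω))|(MeasurableSpace.comap X mS)]) ω
      = m1 (X ω) - m0 (X ω)
    rw [hDcond, hω]
    simp
  refine ⟨h1, h2, ?_⟩
  -- third conjunct
  intro G hG
  have t1 := condExp_condExp_of_le (μ := P)
    (f := fun ω => W ω + (m1 (X ω) - m0 (X ω))) hG hm
  have t2 := condExp_congr_ae (m := G) (μ := P) h2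
  exact t1.symm.trans t2
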